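/- For every run ⟨b, e, c⟩ in a string s, every substring of s[b..e] of length 2c is a square. -/

import Mathlib

/-- `w` is periodic with (positive) period candidate `c` (no upper bound on `c`). -/
def hasPer (w : List Char) (c : ℕ) : Prop :=
  0 < c ∧ ∀ j, j + c < w.length → w[j]? = w[j + c]?

/-- `c` is a period of `w`: `0 < c ≤ |w|` and `w[i] = w[i+c]` for all valid `i`. -/
def hasPeriod (w : List Char) (c : ℕ) : Prop :=
  hasPer w c ∧ c ≤ w.length

/-- the substring `s[i..j]` (1-indexed, inclusive). -/
def sub (s : List Char) (i j : ℕ) : List Char :=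
  (s.drop (i - 1)).take (j - i + 1)

/-- `p` occurs in `s` at (1-indexed) position `i`. -/
def occursAt (s p : List Char) (i : ℕ) : Prop :=
  1 ≤ i ∧ i + p.length ≤ s.length + 1 ∧ sub s i (i + p.length - 1) = p

/-- `u^k` -/
def listPow (u : List Char) (k : ℕ) : List Char := (List.replicate k u).flatten

/-- `u` is primitive: not of the form `v^k` with `k > 1`. -/
def primitive (u : List Char) : Prop :=
  ¬ ∃ v k, 1 < k ∧ u = listPow v k

/-- `⟨b,e,c⟩` is a run of `s` (1-indexed). -/
def isRun (s : List Char) (b e c : ℕ) : Prop :=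
  1 ≤ b ∧ b ≤ e ∧ e ≤ s.length ∧
  2 * c ≤ e - b + 1 ∧
  hasPeriod (sub s b e) c ∧
  (∀ c', hasPeriod (sub s b e) c' → c ≤ c') ∧
  (1 < b → ¬ hasPer (sub s (b - 1) e) c) ∧
  (e < s.length → ¬ hasPer (sub s b (e + 1)) c)

/-- length of the longest common prefix. -/
def lcp : List Char → List Char → ℕ
  | a :: u, b :: v => if a = b then lcp u v + 1 else 0
  | _, _ => 0

/-- length of the longest common suffix. -/
def lcs (u v : List Char) : ℕ := lcp u.reverse v.reverse

/-- `per_R(w,c)`: length of the longest prefix of `w` having period `c`. -/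
noncomputable def perR (w : List Char) (c : ℕ) : ℕ :=
  sSup {r | r ≤ w.length ∧ hasPer (w.take r) c}

/-- `per_L(w,c)`: length of the longest suffix of `w` having period `c`. -/
noncomputable def perL (w : List Char) (c : ℕ) : ℕ :=
  sSup {r | r ≤ w.length ∧ hasPer (w.drop (w.length - r)) c}

private lemma sub_getElem? (s : List Char) (i j k : ℕ) (hk : k < j - i + 1) :
    (sub s i j)[k]? = s[i - 1 + k]? := by
  unfold sub
  rw [List.getElem?_take, if_pos hk, List.getElem?_drop]

private lemma sub_length (s : List Char) (i j : ℕ) (h : i - 1 + (j - i + 1) ≤ s.length) :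
    (sub s i j).length = j - i + 1 := by
  unfold sub
  rw [List.length_take, List.length_drop]; omega

private lemma listPow_length (v : List Char) (k : ℕ) :
    (listPow v k).length = k * v.length := by
  unfold listPow
  simp [List.map_replicate, List.sum_replicate, smul_eq_mul]

private lemma join_eq_flatten' (l : List (List Char)) : l.flatten = l.flatten := rfl

private lemma listPow_add (v : List Char) (m n : ℕ) :
    listPow v (m + n) = listPow v m ++ listPow v n := by
  unfold listPow
  rw [List.replicate_add, join_eq_flatten', join_eq_flatten', join_eq_flatten',
    List.flatten_append]

private lemma listPow_getElem? (v : List Char) :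
    ∀ k j, j < k * v.length → (listPow v k)[j]? = v[j % v.length]? := by
  intro k
  induction k with
  | zero => intro j h; omega
  | succ k ih =>
    intro j h
    have hrw : listPow v (k + 1) = v ++ listPow v k := by
      unfold listPow; rw [List.replicate_succ, join_eq_flatten', join_eq_flatten', List.flatten_cons]
    rw [hrw, List.getElem?_append]
    by_cases hj : j < v.length
    · rw [if_pos hj, Nat.mod_eq_of_lt hj]
    · push_neg at hj
      have hvpos : 0 < v.length := by
        rcases Nat.eq_zero_or_pos v.length with h0 | h0
        · simp [h0] at h
        · exact h0
      rw [if_neg (by omega)]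
      rw [ih (j - v.length) (by
        have : (k + 1) * v.length = k * v.length + v.length := by ring
        omega)]
      rw [Nat.mod_eq_sub_mod hj]
theorem stmt6 (s : List Char) (b e c : ℕ) (hrun : isRun s b e c)
    (i : ℕ) (hbi : b ≤ i) (hie : i + 2 * c - 1 ≤ e) :
    ∃ u, primitive u ∧ sub s i (i + 2 * c - 1) = u ++ u := by
  obtain ⟨hb1, hbe, hes, h2c, ⟨⟨hc0, hW⟩, hcL⟩, hmin, -, -⟩ := hrun
  have hWlen : (sub s b e).length = e - b + 1 := sub_length s b e (by omega)
  rw [hWlen] at hcL hW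
  have ho2c : i - 1 + 2 * c ≤ e := by omega
  -- period c of the run body, phrased on s-indices
  have Pc : ∀ x, b - 1 ≤ x → x + c < e → s[x]? = s[x + c]? := by
    intro x hbx hxe
    have h1 : x - (b - 1) + c < e - b + 1 := by omega
    have := hW (x - (b - 1)) h1
    rw [sub_getElem? s b e _ (by omega), sub_getElem? s b e _ (by omega)] at this
    have e1 : b - 1 + (x - (b - 1)) = x := by omega
    have e2 : b - 1 + (x - (b - 1) + c) = x + c := by omega
    rw [e1, e2] at this; exact this
  -- the window
  set w : List Char := sub s i (i + 2 * c - 1) with hwdef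
  have hwlen : w.length = 2 * c := by
    rw [hwdef, sub_length s i (i + 2 * c - 1) (by omega)]; omega
  have hwget : ∀ k, k < 2 * c → w[k]? = s[i - 1 + k]? := by
    intro k hk
    rw [hwdef, sub_getElem? s i (i + 2 * c - 1) k (by omega)]
  have hwper : ∀ j, j + c < 2 * c → w[j]? = w[j + c]? := by
    intro j hj
    rw [hwget j (by omega), hwget (j + c) (by omega)]
    have e1 : i - 1 + (j + c) = (i - 1 + j) + c := by omega
    rw [e1]
    exact Pc (i - 1 + j) (by omega) (by omega)
  -- the square decomposition
  have hdt : w.drop c = w.take c := by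
    apply List.ext_getElem?
    intro n
    rw [List.getElem?_drop, List.getElem?_take]
    by_cases hn : n < c
    · rw [if_pos hn]
      have e1 : c + n = n + c := by omega
      rw [e1]
      exact (hwper n (by omega)).symm
    · rw [if_neg hn]
      apply List.getElem?_eq_none
      rw [hwlen]; omega
  have hsq : w = w.take c ++ w.take c := by
    conv_lhs => rw [← List.take_append_drop c w]
    rw [hdt]
  refine ⟨w.take c, ?_, hsq⟩
  -- primitivity
  rintro ⟨v, k, hk, huv⟩
  have hulen : (w.take c).length = c := by
    rw [List.length_take, hwlen]; omega
  have hkd : c = k * v.length := by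
    rw [← hulen, huv, listPow_length]
  have hd0 : 0 < v.length := by
    rcases Nat.eq_zero_or_pos v.length with h0 | h0
    · rw [h0, Nat.mul_zero] at hkd; omega
    · exact h0
  have hdc : v.length < c := by
    have : 2 * v.length ≤ k * v.length := Nat.mul_le_mul_right _ hk
    omega
  -- window has period v.length
  have hw2 : w = listPow v (2 * k) := by
    have : 2 * k = k + k := by omega
    rw [this, listPow_add, ← huv, ← hsq]
  have h2kd : 2 * c = 2 * k * v.length := by rw [hkd]; ring
  have hwd : ∀ j, j + v.length < 2 * c → w[j]? = w[j + v.length]? := by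
    intro j hj
    rw [hw2, listPow_getElem? v (2 * k) j (by omega),
      listPow_getElem? v (2 * k) (j + v.length) (by omega), Nat.add_mod_right]
  -- window period on s-indices
  have Pwin : ∀ x, i - 1 ≤ x → x + v.length < i - 1 + 2 * c → s[x]? = s[x + v.length]? := by
    intro x hix hxlt
    have h1 := hwd (x - (i - 1)) (by omega)
    rw [hwget _ (by omega), hwget _ (by omega)] at h1
    have e1 : i - 1 + (x - (i - 1)) = x := by omega
    have e2 : i - 1 + (x - (i - 1) + v.length) = x + v.length := by omega
    rw [e1, e2] at h1; exact h1
  -- propagate the period v.length down/right over the whole run body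
  have hA : ∀ x, i - 1 ≤ x → x + v.length < e → s[x]? = s[x + v.length]? := by
    intro x
    induction x using Nat.strong_induction_on with
    | _ x ih =>
      intro hix hxe
      by_cases hx : x < i - 1 + c
      · exact Pwin x hix (by omega)
      · push_neg at hx
        have h1 : s[x - c]? = s[x - c + c]? := Pc (x - c) (by omega) (by omega)
        have h2 : s[x - c + v.length]? = s[x - c + v.length + c]? := Pc (x - c + v.length) (by omega) (by omega)
        have h3 := ih (x - c) (by omega) (by omega) (by omega)
        have e1 : x - c + c = x := by omega
        have e2 : x - c + v.length + c = x + v.length := by omega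
        rw [e1] at h1; rw [e2] at h2
        rw [← h1, h3, h2]
  -- propagate left
  have hB : ∀ n x, i - 1 - x ≤ n → b - 1 ≤ x → x + v.length < e → s[x]? = s[x + v.length]? := by
    intro n
    induction n with
    | zero => intro x hn hbx hxe; exact hA x (by omega) hxe
    | succ n ih =>
      intro x hn hbx hxe
      by_cases hx : i - 1 ≤ x
      · exact hA x hx hxe
      · push_neg at hx
        have h1 : s[x]? = s[x + c]? := Pc x hbx (by omega)
        have h2 : s[x + v.length]? = s[x + v.length + c]? := Pc (x + v.length) (by omega) (by omega)
        have h3 := ih (x + c) (by omega) (by omega) (by omega)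
        have e2 : x + c + v.length = x + v.length + c := by omega
        rw [h1, h3, e2, ← h2]
  -- the run body has period v.length : contradiction with minimality
  have hperd : hasPeriod (sub s b e) v.length := by
    refine ⟨⟨hd0, ?_⟩, by rw [hWlen]; omega⟩
    intro j hj
    rw [hWlen] at hj
    rw [sub_getElem? s b e j (by omega), sub_getElem? s b e (j + v.length) (by omega)]
    have e1 : b - 1 + (j + v.length) = (b - 1 + j) + v.length := by omega
    rw [e1]
    exact hB (i - 1 - (b - 1 + j)) (b - 1 + j) le_rfl (by omega) (by omega)
  have := hmin v.length hperd
  omega
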